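/- Soundness of the Ros^□ rule over (0,n)-accessible frames for n ≥ 2: if NRA_{0,n} ⊢ ψ then ψ is valid on every (0,n)-accessible N-frame. -/

import Mathlib

inductive Formula : Type
  | bot : Formula
  | var : ℕ → Formula
  | neg : Formula → Formula
  | or : Formula → Formula → Formula
  | box : Formula → Formula
  deriving DecidableEq

namespace Formula

def imp (φ ψ : Formula) : Formula := .or (.neg φ) ψ

def and (φ ψ : Formula) : Formula := .neg (.or (.neg φ) (.neg ψ))

/-- □^n φ -/
def boxn : ℕ → Formula → Formula
  | 0, φ => φ
  | k+1, φ => .box (boxn k φ)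

/-- the set of subformulas -/
def sub : Formula → Finset Formula
  | .bot => {.bot}
  | .var p => {.var p}
  | .neg φ => insert (.neg φ) φ.sub
  | .or φ ψ => insert (.or φ ψ) (φ.sub ∪ ψ.sub)
  | .box φ => insert (.box φ) φ.sub

/-- ∼ρ -/
def negg : Formula → Formula
  | .neg φ => φ
  | φ => .neg φ

end Formula

def NSub (ψ : Formula) : Finset Formula := ψ.sub ∪ ψ.sub.image Formula.negg

/-- boolean evaluation treating boxed formulas and variables as atoms -/
def evalP (v : Formula → Bool) : Formula → Bool
  | .bot => false
  | .var p => v (.var p)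
  | .neg φ => !(evalP v φ)
  | .or φ ψ => evalP v φ || evalP v ψ
  | .box φ => v (.box φ)

/-- propositional tautologies in the modal language -/
def Tautology (φ : Formula) : Prop := ∀ v, evalP v φ = true

/-- Provability in NA_{m,n} (ros = false) and NRA_{m,n} (ros = true):
    propositional tautologies, the scheme □^n φ → □^m φ, modus ponens,
    necessitation, and (if ros) the rule Ros^□ : ¬□φ / ¬□□φ. -/
inductive Prov (m n : ℕ) (ros : Bool) : Formula → Prop
  | taut {φ} : Tautology φ → Prov m n ros φ
  | axA (φ) : Prov m n ros ((Formula.boxn n φ).imp (Formula.boxn m φ))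
  | mp {φ ψ} : Prov m n ros (φ.imp ψ) → Prov m n ros φ → Prov m n ros ψ
  | nec {φ} : Prov m n ros φ → Prov m n ros (.box φ)
  | ros {φ} : ros = true → Prov m n ros (.neg (.box φ)) →
      Prov m n ros (.neg (.box (.box φ)))

/-- An N-frame on world set W: a binary relation R_φ for each formula φ. -/
abbrev NFrame (W : Type) := Formula → W → W → Prop

structure NModel (W : Type) where
  Rel : NFrame W
  V : W → ℕ → Prop

/-- satisfaction in an N-model -/
def Sat {W : Type} (M : NModel W) : W → Formula → Prop
  | _, .bot => False
  | w, .var p => M.V w p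
  | w, .neg φ => ¬ Sat M w φ
  | w, .or φ ψ => Sat M w φ ∨ Sat M w ψ
  | w, .box φ => ∀ w', M.Rel φ w w' → Sat M w' φ

/-- x R_φ^k y : there is a φ-path of length k from x to y -/
def FPath {W : Type} (R : NFrame W) (φ : Formula) : ℕ → W → W → Prop
  | 0, x, y => x = y
  | k+1, x, y => ∃ w, R (Formula.boxn k φ) x w ∧ FPath R φ k w y

/-- (m,n)-accessibility for φ -/
def AccFor {W : Type} (R : NFrame W) (m n : ℕ) (φ : Formula) : Prop :=
  ∀ x y, FPath R φ m x y → FPath R φ n x y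

/-- Γ-(m,n)-accessibility -/
def SubAcc {W : Type} (R : NFrame W) (m n : ℕ) (Γ : Finset Formula) : Prop :=
  ∀ φ, Formula.boxn m φ ∈ Γ → AccFor R m n φ

/-- (m,n)-accessibility -/
def Accessible {W : Type} (R : NFrame W) (m n : ℕ) : Prop :=
  ∀ φ, AccFor R m n φ

def ValidM {W : Type} (M : NModel W) (ψ : Formula) : Prop := ∀ w, Sat M w ψ

def ValidF {W : Type} (R : NFrame W) (ψ : Formula) : Prop :=
  ∀ V : W → ℕ → Prop, ValidM ⟨R, V⟩ ψ



lemma boxn_box (k : ℕ) (φ : Formula) :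
    Formula.boxn k (.box φ) = Formula.boxn (k+1) φ := by
  induction k with
  | zero => rfl
  | succ k ih => simp [Formula.boxn, ih]

open Classical in
lemma taut_sound {W : Type} (M : NModel W) (w : W) {φ : Formula}
    (h : Tautology φ) : Sat M w φ := by
  have key : ∀ ρ, Sat M w ρ ↔ evalP (fun χ => decide (Sat M w χ)) ρ = true := by
    intro ρ
    induction ρ with
    | bot => simp [Sat, evalP]
    | var p => simp [Sat, evalP] <;> exact ⟨fun h => @decide_eq_true _ _ h, fun h => @of_decide_eq_true _ _ h⟩
    | neg φ ih => simp [Sat, evalP, ih]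
    | or φ ψ ih1 ih2 => simp [Sat, evalP, ih1, ih2]
    | box φ ih => simp [Sat, evalP] <;> exact ⟨fun h => @decide_eq_true _ _ h, fun h => @of_decide_eq_true _ _ h⟩
  exact (key φ).mpr (h _)

lemma path_sound {W : Type} {M : NModel W} {φ : Formula} :
    ∀ (k : ℕ) (x y : W), FPath M.Rel φ k x y →
      Sat M x (Formula.boxn k φ) → Sat M y φ := by
  intro k
  induction k with
  | zero => intro x y hxy hs; cases hxy; exact hs
  | succ k ih =>
    intro x y hxy hs
    obtain ⟨u, hru, hp⟩ := hxy
    exact ih u y hp (hs u hru)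

lemma keyL {W : Type} {M : NModel W} {k : ℕ}
    (hacc : Accessible M.Rel 0 (k+1)) {θ : Formula}
    (hv : ∀ w, ¬ Sat M w (Formula.boxn (k+1) θ)) :
    ∀ x, ¬ Sat M x (.box (Formula.boxn (k+1) θ)) := by
  intro x hx
  have hp : FPath M.Rel (.box θ) (k+1) x x := hacc (.box θ) x x rfl
  obtain ⟨u, hru, -⟩ := hp
  rw [boxn_box] at hru
  exact hv u (hx u hru)

/-- a universal (0,n)-accessible frame on two worlds: the world `false`
    only has outgoing edges labelled `□^{n-1}φ`. -/
def badR (n : ℕ) : NFrame Bool :=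
  fun ρ x _ => x = true ∨ ∃ φ, ρ = Formula.boxn (n-1) φ

lemma badR_tail (n : ℕ) (φ : Formula) :
    ∀ (j : ℕ) (x : Bool), FPath (badR n) φ (j+1) true x := by
  intro j
  induction j with
  | zero => intro x; exact ⟨x, Or.inl rfl, rfl⟩
  | succ j ih => intro x; exact ⟨true, Or.inl rfl, ih x⟩

lemma badR_acc (m : ℕ) : Accessible (badR (m+2)) 0 (m+2) := by
  intro φ x y hxy
  cases hxy
  refine ⟨true, Or.inr ⟨φ, ?_⟩, badR_tail (m+2) φ m x⟩
  simp

theorem stmt19 (n : ℕ) (hn : 2 ≤ n) (ψ : Formula) (h : Prov 0 n true ψ) :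
    ∀ (W : Type) [Nonempty W] (R : NFrame W),
      Accessible R 0 n → ValidF R ψ := by
  obtain ⟨m, rfl⟩ : ∃ m, n = m + 2 := ⟨n - 2, by omega⟩
  induction h with
  | taut ht =>
    intro W _ R hacc V w
    exact taut_sound _ w ht
  | axA φ =>
    intro W _ R hacc V w
    show ¬ Sat ⟨R, V⟩ w (Formula.boxn (m+2) φ) ∨ Sat ⟨R, V⟩ w (Formula.boxn 0 φ)
    rw [or_iff_not_imp_left, not_not]
    intro hs
    exact path_sound (m+2) w w (hacc φ w w rfl) hs
  | mp h1 h2 ih1 ih2 =>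
    intro W _ R hacc V w
    have s1 := ih1 W R hacc V w
    have s2 := ih2 W R hacc V w
    rcases s1 with s1 | s1
    · exact absurd s2 s1
    · exact s1
  | nec h ih =>
    intro W _ R hacc V w
    intro w' _
    exact ih W R hacc V w'
  | @ros χ _ hprem ih =>
    -- Step 1: χ must be of the form □^{n-1} θ
    have hθ : ∃ θ, χ = Formula.boxn (m+2-1) θ := by
      by_contra hno
      push_neg at hno
      have hval := ih Bool (badR (m+2)) (badR_acc m) (fun _ _ => False) false
      apply hval
      intro w' hrel
      rcases hrel with hrel | ⟨φ, hφ⟩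
      · exact absurd hrel (by simp)
      · exact absurd hφ (hno φ)
    obtain ⟨θ, rfl⟩ := hθ
    have hm1 : m + 2 - 1 = m + 1 := rfl
    rw [hm1]
    -- Step 2: key lemma
    intro W _ R hacc V x
    have hv : ∀ w, ¬ Sat ⟨R, V⟩ w (Formula.boxn (m+2) θ) := by
      intro w
      have := ih W R hacc V w
      rw [hm1] at this
      exact this
    exact fun hx => keyL (M := ⟨R, V⟩) hacc hv x hx
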